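/- Let S and A be finite nonempty types, let γ ∈ ℝ with 0 ≤ γ < 1, let P : S → A → S → ℝ be a transition kernel, let Q : S → A → ℝ, let ρUN : S → A → ℝ with 0 ≤ ρUN s a for all s, a, let μ0 : S → ℝ with 0 < μ0 s for all s, and let ψ : ℝ → ℝ be monotone nondecreasing. For π : S → A → ℝ define Vπ s = ∑ a, (π s a * Q s a + negMulLog (π s a)), rπ s a = Q s a − γ * ∑ s', P s a s' * Vπ s', and L π = (∑ s, ∑ a, ρUN s a * rπ s a) − (1 − γ) * (∑ s, μ0 s * Vπ s) + (∑ s, ∑ a, ψ (rπ s a)). Define VQ : S → ℝ by VQ s = log (∑ a, exp (Q s a)) and rQ : S → A → ℝ by rQ s a = Q s a − γ * ∑ s', P s a s' * VQ s'. Then the value F(Q) = (∑ s, ∑ a, ρUN s a * rQ s a) − (1 − γ) * (∑ s, μ0 s * VQ s) + (∑ s, ∑ a, ψ (rQ s a)) is the least value of L over policies: F(Q) ∈ L '' {π | ∀ s, π s ∈ stdSimplex ℝ A} and F(Q) ≤ L π for every policy π. -/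

import Mathlib

lemma key_le {A : Type*} [Fintype A] [Nonempty A] (Q : A → ℝ) (p : A → ℝ)
    (hp : p ∈ stdSimplex ℝ A) :
    ∑ a, (p a * Q a + Real.negMulLog (p a)) ≤ Real.log (∑ a, Real.exp (Q a)) := by
  set Z := ∑ a, Real.exp (Q a) with hZ
  have hZpos : 0 < Z := Finset.sum_pos (fun a _ => Real.exp_pos _) Finset.univ_nonempty
  have hterm : ∀ a, p a * Q a + Real.negMulLog (p a)
      ≤ p a * Real.log Z + (Real.exp (Q a) / Z - p a) := by
    intro a
    rcases eq_or_lt_of_le (hp.1 a) with h0 | h0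
    · simp [← h0, Real.negMulLog]
      positivity
    · have hx : 0 < Real.exp (Q a) / (Z * p a) := by positivity
      have hlog : Real.log (Real.exp (Q a) / (Z * p a)) ≤ Real.exp (Q a) / (Z * p a) - 1 :=
        Real.log_le_sub_one_of_pos hx
      have heq : Real.log (Real.exp (Q a) / (Z * p a)) = Q a - Real.log Z - Real.log (p a) := by
        rw [Real.log_div (Real.exp_ne_zero _) (by positivity), Real.log_exp,
          Real.log_mul (ne_of_gt hZpos) (ne_of_gt h0)]
        ring
      have := mul_le_mul_of_nonneg_left hlog (le_of_lt h0)
      rw [heq] at this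
      have heq2 : p a * (Real.exp (Q a) / (Z * p a) - 1) = Real.exp (Q a) / Z - p a := by
        field_simp
      rw [heq2] at this
      simp only [Real.negMulLog]
      nlinarith [this]
  calc ∑ a, (p a * Q a + Real.negMulLog (p a))
      ≤ ∑ a, (p a * Real.log Z + (Real.exp (Q a) / Z - p a)) :=
        Finset.sum_le_sum fun a _ => hterm a
    _ = Real.log Z := by
        rw [Finset.sum_add_distrib, ← Finset.sum_mul, hp.2, Finset.sum_sub_distrib,
          ← Finset.sum_div, hp.2, ← hZ]
        field_simp
        ring

lemma key_eq {A : Type*} [Fintype A] [Nonempty A] (Q : A → ℝ) :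
    (fun a => Real.exp (Q a) / ∑ b, Real.exp (Q b)) ∈ stdSimplex ℝ A ∧
    ∑ a, ((Real.exp (Q a) / ∑ b, Real.exp (Q b)) * Q a
      + Real.negMulLog (Real.exp (Q a) / ∑ b, Real.exp (Q b)))
      = Real.log (∑ a, Real.exp (Q a)) := by
  set Z := ∑ b, Real.exp (Q b) with hZ
  have hZpos : 0 < Z := Finset.sum_pos (fun a _ => Real.exp_pos _) Finset.univ_nonempty
  constructor
  · refine ⟨fun a => by positivity, ?_⟩
    rw [← Finset.sum_div, ← hZ]
    field_simp
  · have : ∀ a, (Real.exp (Q a) / Z) * Q a + Real.negMulLog (Real.exp (Q a) / Z)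
        = (Real.exp (Q a) / Z) * Real.log Z := by
      intro a
      have : Real.log (Real.exp (Q a) / Z) = Q a - Real.log Z := by
        rw [Real.log_div (Real.exp_ne_zero _) (ne_of_gt hZpos), Real.log_exp]
      simp only [Real.negMulLog, this]
      ring
    rw [Finset.sum_congr rfl fun a _ => this a, ← Finset.sum_mul, ← Finset.sum_div, ← hZ]
    field_simp



/-- Proposition 2(ii): the Q-space objective `F(Q)`, built from the soft value
`VQ s = log ∑ exp Q(s,·)` and recovered reward `rQ = Q - γ P VQ`, is the least
value of `L(·, Q)` over the set of policies. -/
theorem stmt_7 {S A : Type*} [Fintype S] [Fintype A] [Nonempty S] [Nonempty A]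
    (γ : ℝ) (hγ0 : 0 ≤ γ) (hγ1 : γ < 1)
    (P : S → A → S → ℝ)
    (hP0 : ∀ s a s', 0 ≤ P s a s') (hP1 : ∀ s a, ∑ s', P s a s' = 1)
    (Q : S → A → ℝ)
    (ρUN : S → A → ℝ) (hρUN : ∀ s a, 0 ≤ ρUN s a)
    (μ0 : S → ℝ) (hμ0 : ∀ s, 0 < μ0 s)
    (ψ : ℝ → ℝ) (hψmono : Monotone ψ)
    (Vπ : (S → A → ℝ) → S → ℝ)
    (hVπ : ∀ π s, Vπ π s = ∑ a, (π s a * Q s a + Real.negMulLog (π s a)))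
    (rπ : (S → A → ℝ) → S → A → ℝ)
    (hrπ : ∀ π s a, rπ π s a = Q s a - γ * ∑ s', P s a s' * Vπ π s')
    (L : (S → A → ℝ) → ℝ)
    (hL : ∀ π, L π = (∑ s, ∑ a, ρUN s a * rπ π s a)
      - (1 - γ) * (∑ s, μ0 s * Vπ π s) + (∑ s, ∑ a, ψ (rπ π s a)))
    (VQ : S → ℝ) (hVQ : ∀ s, VQ s = Real.log (∑ a, Real.exp (Q s a)))
    (rQ : S → A → ℝ) (hrQ : ∀ s a, rQ s a = Q s a - γ * ∑ s', P s a s' * VQ s') :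
    ((∑ s, ∑ a, ρUN s a * rQ s a) - (1 - γ) * (∑ s, μ0 s * VQ s)
        + (∑ s, ∑ a, ψ (rQ s a)))
      ∈ L '' {π : S → A → ℝ | ∀ s, π s ∈ stdSimplex ℝ A} ∧
    ∀ π : S → A → ℝ, (∀ s, π s ∈ stdSimplex ℝ A) →
      ((∑ s, ∑ a, ρUN s a * rQ s a) - (1 - γ) * (∑ s, μ0 s * VQ s)
        + (∑ s, ∑ a, ψ (rQ s a))) ≤ L π := by
  constructor
  · refine ⟨fun s a => Real.exp (Q s a) / ∑ b, Real.exp (Q s b),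
      fun s => (key_eq (Q s)).1, ?_⟩
    have hV : ∀ s, Vπ (fun s a => Real.exp (Q s a) / ∑ b, Real.exp (Q s b)) s = VQ s := by
      intro s; rw [hVπ, hVQ]; exact (key_eq (Q s)).2
    have hr : ∀ s a, rπ (fun s a => Real.exp (Q s a) / ∑ b, Real.exp (Q s b)) s a
        = rQ s a := by
      intro s a; rw [hrπ, hrQ]
      simp only [hV]
    rw [hL]
    simp only [hr, hV]
  · intro π hπ
    have hV : ∀ s, Vπ π s ≤ VQ s := by
      intro s; rw [hVπ, hVQ]; exact key_le (Q s) (π s) (hπ s)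
    have hr : ∀ s a, rQ s a ≤ rπ π s a := by
      intro s a; rw [hrQ, hrπ]
      have : ∑ s', P s a s' * Vπ π s' ≤ ∑ s', P s a s' * VQ s' :=
        Finset.sum_le_sum fun s' _ => mul_le_mul_of_nonneg_left (hV s') (hP0 s a s')
      nlinarith
    rw [hL]
    gcongr ?_ - ?_ + ?_
    · exact Finset.sum_le_sum fun s _ => Finset.sum_le_sum fun a _ =>
        mul_le_mul_of_nonneg_left (hr s a) (hρUN s a)
    · have h1γ : (0:ℝ) ≤ 1 - γ := by linarith
      exact mul_le_mul_of_nonneg_left (Finset.sum_le_sum fun s _ =>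
        mul_le_mul_of_nonneg_left (hV s) (hμ0 s).le) h1γ
    · exact Finset.sum_le_sum fun s _ => Finset.sum_le_sum fun a _ => hψmono (hr s a)
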